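/- Let A ∈ ℂ^{n×n} be Hermitian positive semidefinite and X ∈ ℂ^{n×p}. Then A − AX (X*AX)⁺ X*A is Hermitian positive semidefinite. -/

import Mathlib

open Matrix
open scoped ComplexOrder

/-- `Mp` satisfies the four Penrose conditions for `M`. -/
def IsMoorePenrose {a b : ℕ} (M : Matrix (Fin a) (Fin b) ℂ)
    (Mp : Matrix (Fin b) (Fin a) ℂ) : Prop :=
  M * Mp * M = M ∧ Mp * M * Mp = Mp ∧ (M * Mp)ᴴ = M * Mp ∧ (Mp * M)ᴴ = Mp * M

/-- Uniqueness of the Moore–Penrose pseudoinverse. -/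
theorem mp_unique {a b : ℕ} (M : Matrix (Fin a) (Fin b) ℂ)
    (P Q : Matrix (Fin b) (Fin a) ℂ)
    (hP : IsMoorePenrose M P) (hQ : IsMoorePenrose M Q) : P = Q := by
  obtain ⟨hP1, hP2, hP3, hP4⟩ := hP
  obtain ⟨hQ1, hQ2, hQ3, hQ4⟩ := hQ
  have h1 : M * P = M * Q := by
    have e1 : M * P = (M * Q) * (M * P) := by
      conv_lhs => rw [← hQ1]
      rw [Matrix.mul_assoc]
    have e2 : (M * Q) * (M * P) = ((M * P) * (M * Q))ᴴ := by
      rw [conjTranspose_mul, hP3, hQ3]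
    have e3 : (M * P) * (M * Q) = M * Q := by
      rw [← Matrix.mul_assoc, hP1]
    rw [e1, e2, e3, hQ3]
  have h2 : P * M = Q * M := by
    have e1 : P * M = (P * M) * (Q * M) := by
      conv_lhs => rw [← hQ1]
      rw [← Matrix.mul_assoc, ← Matrix.mul_assoc, Matrix.mul_assoc (P * M) Q M]
    have e2 : (P * M) * (Q * M) = ((Q * M) * (P * M))ᴴ := by
      rw [conjTranspose_mul, hP4, hQ4]
    have e3 : (Q * M) * (P * M) = Q * M := by
      rw [Matrix.mul_assoc, ← Matrix.mul_assoc M P M, hP1]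
    rw [e1, e2, e3, hQ4]
  calc P = P * M * P := hP2.symm
    _ = Q * M * P := by rw [h2]
    _ = Q * (M * P) := by rw [Matrix.mul_assoc]
    _ = Q * (M * Q) := by rw [h1]
    _ = Q * M * Q := by rw [Matrix.mul_assoc]
    _ = Q := hQ2

/-- The pseudoinverse of a Hermitian matrix is Hermitian. -/
theorem mp_herm {a : ℕ} (M Mp : Matrix (Fin a) (Fin a) ℂ) (hM : Mᴴ = M)
    (h : IsMoorePenrose M Mp) : Mpᴴ = Mp := by
  obtain ⟨h1, h2, h3, h4⟩ := h
  refine mp_unique M Mpᴴ Mp ⟨?_, ?_, ?_, ?_⟩ ⟨h1, h2, h3, h4⟩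
  · calc M * Mpᴴ * M = (Mᴴ * Mp * Mᴴ)ᴴ := by
          simp [conjTranspose_mul, Matrix.mul_assoc]
    _ = M := by rw [hM, h1, hM]
  · calc Mpᴴ * M * Mpᴴ = (Mp * Mᴴ * Mp)ᴴ := by
          simp [conjTranspose_mul, Matrix.mul_assoc]
    _ = Mpᴴ := by rw [hM, h2]
  · have e : M * Mpᴴ = Mp * M := by
      calc M * Mpᴴ = (Mp * Mᴴ)ᴴ := by simp [conjTranspose_mul]
      _ = (Mp * M)ᴴ := by rw [hM]
      _ = Mp * M := h4
    rw [e, h4]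
  · have e : Mpᴴ * M = M * Mp := by
      calc Mpᴴ * M = (Mᴴ * Mp)ᴴ := by simp [conjTranspose_mul]
      _ = (M * Mp)ᴴ := by rw [hM]
      _ = M * Mp := h3
    rw [e, h3]

/-- The generalized Wedderburn reduction of a Hermitian positive semidefinite
    matrix by X = Y is Hermitian positive semidefinite. -/
theorem reduction_of_posSemidef_is_posSemidef (n p : ℕ)
    (A : Matrix (Fin n) (Fin n) ℂ) (hA : A.PosSemidef)
    (X : Matrix (Fin n) (Fin p) ℂ)
    (Mp : Matrix (Fin p) (Fin p) ℂ) (hMp : IsMoorePenrose (Xᴴ * A * X) Mp) :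
    (A - A * X * Mp * (Xᴴ * A)).PosSemidef := by
  set S := (open scoped MatrixOrder in CFC.sqrt A) with hSdef
  have hS : S * S = A := by open scoped MatrixOrder in exact CFC.sqrt_mul_sqrt_self A hA.nonneg
  have hSH : Sᴴ = S := by open scoped MatrixOrder in exact (CFC.sqrt_nonneg A).posSemidef.1
  set B := S * X with hBdef
  have hM : Xᴴ * A * X = Bᴴ * B := by
    rw [hBdef, conjTranspose_mul, hSH, ← hS]
    simp only [Matrix.mul_assoc]
  have hMH : (Xᴴ * A * X)ᴴ = Xᴴ * A * X := by
    simp only [conjTranspose_mul, conjTranspose_conjTranspose, hA.1.eq, Matrix.mul_assoc]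
  have hMpH : Mpᴴ = Mp := mp_herm _ _ hMH hMp
  obtain ⟨h1, h2, h3, h4⟩ := hMp
  set P := B * Mp * Bᴴ with hPdef
  have hPH : Pᴴ = P := by
    rw [hPdef]
    simp [conjTranspose_mul, hMpH, Matrix.mul_assoc]
  have hPP : P * P = P := by
    rw [hPdef]
    calc B * Mp * Bᴴ * (B * Mp * Bᴴ)
        = B * (Mp * (Bᴴ * B) * Mp) * Bᴴ := by
          simp only [Matrix.mul_assoc]
    _ = B * (Mp * (Xᴴ * A * X) * Mp) * Bᴴ := by rw [hM]
    _ = B * Mp * Bᴴ := by rw [h2, Matrix.mul_assoc]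
  have hIP : (1 - P).PosSemidef := by
    have : (1 - P)ᴴ * (1 - P) = 1 - P := by
      rw [conjTranspose_sub, conjTranspose_one, hPH, Matrix.sub_mul, Matrix.mul_sub,
        Matrix.mul_sub, hPP]
      simp
    rw [← this]
    exact posSemidef_conjTranspose_mul_self _
  have key : A - A * X * Mp * (Xᴴ * A) = Sᴴ * (1 - P) * S := by
    rw [hSH, Matrix.mul_sub, Matrix.sub_mul, Matrix.mul_one, hS, hPdef, hBdef]
    congr 1
    rw [conjTranspose_mul, hSH]
    calc A * X * Mp * (Xᴴ * A)
        = (S * S) * X * Mp * (Xᴴ * (S * S)) := by rw [hS]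
    _ = S * (S * X * Mp * (Xᴴ * S)) * S := by simp only [Matrix.mul_assoc]
  rw [key]
  exact hIP.conjTranspose_mul_mul_same S
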